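/- Let p be an odd prime and R an associative ring in which every element has additive order a power of p, and assume R is left p-nil. If x ∈ R satisfies px = 0, then the p-th power of x in the adjoint group equals 0; conversely, if the p-th power of x under the circle operation equals 0, then px = 0. That is, Ω_{\{1\}}(R^∘) = Ω_1(R). -/

import Mathlib

/-- `cpow x k` is the `k`-th power of `x` under the circle operation
`a ∘ b = a + b + a * b`: `cpow x 0 = 0` and `cpow x (k+1) = x ∘ cpow x k`. -/
def cpow {R : Type*} [NonUnitalRing R] (x : R) : ℕ → R
  | 0 => 0
  | k + 1 => x + cpow x k + x * cpow x k

/-- `pw x n = x ^ (n+1)` (positive powers in a non-unital ring). -/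
private def pw {R : Type*} [NonUnitalRing R] (x : R) : ℕ → R
  | 0 => x
  | n + 1 => pw x n * x

private lemma pw_succ {R : Type*} [NonUnitalRing R] (x : R) (n : ℕ) :
    pw x (n + 1) = pw x n * x := rfl

private lemma mul_pw {R : Type*} [NonUnitalRing R] (x : R) (n : ℕ) :
    x * pw x n = pw x (n + 1) := by
  induction n with
  | zero => rfl
  | succ n ih =>
      show x * (pw x n * x) = pw x (n + 1) * x
      rw [← mul_assoc, ih]

private lemma pw_add {R : Type*} [NonUnitalRing R] (x : R) (m n : ℕ) :
    pw x (m + n + 1) = pw x m * pw x n := by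
  induction n with
  | zero => rfl
  | succ n ih =>
      rw [show m + (n + 1) + 1 = (m + n + 1) + 1 by ring, pw_succ, ih,
        mul_assoc, ← pw_succ]

private lemma cpow_eq_sum {R : Type*} [NonUnitalRing R] (x : R) (n : ℕ) :
    cpow x n = ∑ i ∈ Finset.range n, (n.choose (i + 1)) • pw x i := by
  induction n with
  | zero => simp [cpow]
  | succ n ih =>
      rw [cpow, ih, Finset.mul_sum]
      simp_rw [mul_smul_comm, mul_pw]
      have hch : ∀ i ∈ Finset.range (n + 1),
          ((n + 1).choose (i + 1)) • pw x i
            = (n.choose i) • pw x i + (n.choose (i + 1)) • pw x i := by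
        intro i _
        rw [Nat.choose_succ_succ, add_nsmul]
      rw [Finset.sum_congr rfl hch, Finset.sum_add_distrib,
        Finset.sum_range_succ' (fun i => (n.choose i) • pw x i) n,
        Finset.sum_range_succ (fun i => (n.choose (i + 1)) • pw x i) n]
      simp only [Nat.choose_succ_self, zero_smul, add_zero, Nat.choose_zero_right,
        one_smul]
      rw [show (pw x 0 : R) = x from rfl]
      abel

theorem omega_one_adjoint_eq_omega_one {R : Type*} [NonUnitalRing R] (p : ℕ)
    (hp : p.Prime) (hodd : p ≠ 2)
    (hpring : ∀ x : R, ∃ k : ℕ, (p ^ k) • x = 0)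
    (hpnil : ∀ x : R, p • x = 0 → ∀ y : R, x * y = 0) :
    ∀ x : R, p • x = 0 ↔ cpow x p = 0 := by
  intro x
  constructor
  · intro h
    have hx : ∀ y : R, x * y = 0 := hpnil x h
    have key : ∀ n : ℕ, cpow x n = n • x := by
      intro n
      induction n with
      | zero => simp [cpow]
      | succ n ih => rw [cpow, ih, hx, add_zero, succ_nsmul, add_comm]
    rw [key, h]
  · intro hc
    -- p = n + 1
    obtain ⟨n, rfl⟩ : ∃ n, p = n + 1 := ⟨p - 1, (Nat.succ_pred_eq_of_pos hp.pos).symm⟩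
    set p := n + 1 with hpdef
    have hsum : ∑ i ∈ Finset.range n, (p.choose (i + 2)) • pw x (i + 1) + p • x = 0 := by
      have := (cpow_eq_sum x p).symm.trans hc
      rw [Finset.sum_range_succ' (fun i => (p.choose (i + 1)) • pw x i) n] at this
      simpa [Nat.choose_one_right, show pw x 0 = x from rfl, add_assoc] using this
    -- downward induction step
    have step : ∀ k : ℕ, p ^ (k + 2) • x = 0 → p ^ (k + 1) • x = 0 := by
      intro k h2
      have ha : ∀ y : R, (p ^ (k + 1) • x) * y = 0 := by
        apply hpnil
        rw [smul_smul, ← pow_succ']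
        exact h2
      have hb : ∀ y : R, (p ^ k • pw x 1) * y = 0 := by
        apply hpnil
        rw [smul_smul, ← pow_succ']
        show (p ^ (k + 1)) • (x * x) = 0
        rw [← smul_mul_assoc]
        exact ha x
      have hp3 : 2 < p := lt_of_le_of_ne hp.two_le (Ne.symm hodd)
      have hterm : ∀ i ∈ Finset.range n,
          p ^ k • ((p.choose (i + 2)) • pw x (i + 1)) = 0 := by
        intro i _
        cases i with
        | zero =>
            obtain ⟨m, hm⟩ : p ∣ p.choose 2 :=
              hp.dvd_choose_self (by norm_num) hp3
            rw [smul_smul, hm, show p ^ k * (p * m) = m * p ^ (k + 1) by ring, mul_smul,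
              show (p : ℕ) ^ (k + 1) • pw x 1 = (p ^ (k + 1) • x) * x from
                (smul_mul_assoc _ _ _).symm,
              ha, smul_zero]
        | succ j =>
            rw [show j + 1 + 1 = 1 + j + 1 by ring, pw_add, smul_comm,
              ← smul_mul_assoc, hb, smul_zero]
      have h0 := congrArg (fun z : R => p ^ k • z) hsum
      simp only [smul_add, smul_zero, Finset.smul_sum] at h0
      rw [Finset.sum_eq_zero hterm, zero_add, smul_smul, ← pow_succ] at h0
      exact h0
    -- wrap up with induction on additive order
    obtain ⟨k, hk⟩ := hpring x
    clear hc hsum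
    induction k with
    | zero =>
        simp only [pow_zero, one_smul] at hk
        rw [hk, smul_zero]
    | succ k ih =>
        cases k with
        | zero => simpa using hk
        | succ k => exact ih (step k hk)
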